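/- Let X be a locally compact Hausdorff space and μ a regular Borel measure on X. If K ⊆ X is compact and U ⊆ X is open with K ⊆ U and μ(U) < ∞, then there exists a closed μ-Jordan measurable set C (i.e., a closed set whose topological boundary has μ-measure zero) with K ⊆ C ⊆ U. -/

import Mathlib

open MeasureTheory

/-- Between a compact set and an open superset of finite measure one can interpolate a closed
Jordan measurable set (boundary of measure zero). -/
theorem stmt4 {X : Type*} [TopologicalSpace X] [T2Space X] [LocallyCompactSpace X]
    [MeasurableSpace X] [BorelSpace X]
    (μ : Measure X) [μ.Regular]
    (K U : Set X) (hK : IsCompact K) (hU : IsOpen U) (hKU : K ⊆ U) (hfin : μ U < ⊤) :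
    ∃ C : Set X, IsClosed C ∧ μ (frontier C) = 0 ∧ K ⊆ C ∧ C ⊆ U := by
  obtain ⟨f, hf1, hf0, _, hf01⟩ :=
    exists_continuous_one_zero_of_isCompact hK hU.isClosed_compl
      (Set.disjoint_compl_right_iff_subset.mpr hKU)
  -- level sets {f = t}
  set A : Set.Ioo (0:ℝ) 1 → Set X := fun t => f ⁻¹' {t.1} with hA
  have hAsub : ∀ t : Set.Ioo (0:ℝ) 1, A t ⊆ U := by
    intro t x hx
    by_contra hxU
    have h0 : f x = 0 := hf0 hxU
    have hxt : f x = (t : ℝ) := hx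
    exact (ne_of_gt t.2.1) (h0 ▸ hxt).symm
  have hmble : ∀ t : Set.Ioo (0:ℝ) 1, MeasurableSet (A t) :=
    fun t => (f.continuous.measurable) (measurableSet_singleton _)
  have hdisj : Pairwise (Function.onFun Disjoint A) := by
    intro s t hst
    simp only [Function.onFun, hA, Set.disjoint_left]
    intro x hx hx'
    exact hst (Subtype.ext (by simp at hx hx'; rw [← hx, ← hx']))
  have hUnion : μ (⋃ t, A t) ≠ ⊤ :=
    ne_top_of_le_ne_top hfin.ne (measure_mono (Set.iUnion_subset hAsub))
  have hcount := Measure.countable_meas_pos_of_disjoint_of_meas_iUnion_ne_top μ hmble hdisj hUnion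
  have : ∃ t : Set.Ioo (0:ℝ) 1, μ (A t) = 0 := by
    by_contra h
    push_neg at h
    have huniv : {t : Set.Ioo (0:ℝ) 1 | 0 < μ (A t)} = Set.univ := by
      ext t; simpa [pos_iff_ne_zero] using h t
    rw [huniv, Set.countable_univ_iff] at hcount
    have hle := @Cardinal.mk_le_aleph0 (Set.Ioo (0:ℝ) 1) hcount
    rw [Cardinal.mk_Ioo_real (by norm_num : (0:ℝ) < 1)] at hle
    exact absurd hle Cardinal.aleph0_lt_continuum.2
  obtain ⟨t, ht⟩ := this
  have ht0 : μ (A t) = 0 := ht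
  refine ⟨f ⁻¹' Set.Ici t.1, IsClosed.preimage f.continuous isClosed_Ici, ?_, ?_, ?_⟩
  · refine measure_mono_null ?_ ht0
    have h1 : f ⁻¹' Set.Ici t.1 = closure (f ⁻¹' Set.Ici t.1) :=
      (IsClosed.preimage f.continuous isClosed_Ici).closure_eq.symm
    have h2 : f ⁻¹' Set.Ioi t.1 ⊆ interior (f ⁻¹' Set.Ici t.1) :=
      (IsOpen.preimage f.continuous isOpen_Ioi).subset_interior_iff.mpr
        (Set.preimage_mono Set.Ioi_subset_Ici_self)
    intro x hx
    have hxc : f x ∈ Set.Ici t.1 := by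
      have := frontier_subset_closure hx
      rwa [← h1] at this
    have hxn : ¬ f x ∈ Set.Ioi t.1 := fun h => hx.2 (h2 h)
    exact le_antisymm (not_lt.mp hxn) hxc
  · intro x hx
    simp only [Set.mem_preimage, Set.mem_Ici]
    rw [hf1 hx]
    exact le_of_lt t.2.2
  · intro x hx
    by_contra hxU
    have h0 : f x = 0 := hf0 hxU
    simp only [Set.mem_preimage, Set.mem_Ici, h0] at hx
    exact absurd (lt_of_lt_of_le t.2.1 hx) (lt_irrefl _)
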